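/- arXiv:2404.04529 — 2 statements merged into one kernel-verified Lean document; each statement's English description precedes it below -/
import Mathlib

section
/- Let M be a countable ω-categorical homogeneous structure with weak elimination of imaginaries and no algebraicity. Then the group of topological automorphisms of Aut(M) is isomorphic to Aut(E_M), the automorphism group of the orbital structure of M. In particular, if M in addition has the small index property, then Aut(Aut(M)) ≅ Aut(E_M). -/
open FirstOrder

namespace Paper

variable (L : FirstOrder.Language) (M : Type*) [L.Structure M]

/-- The group of automorphisms of a first-order structure, with composition. -/
instance autGroup : Group (M ≃[L] M) where
  one := FirstOrder.Language.Equiv.refl L M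
  mul f g := f.comp g
  inv := FirstOrder.Language.Equiv.symm
  mul_assoc _ _ _ := rfl
  one_mul f := FirstOrder.Language.Equiv.ext fun a => by
    show (FirstOrder.Language.Equiv.refl L M).comp f a = f a; simp
  mul_one f := FirstOrder.Language.Equiv.ext fun a => by
    show f.comp (FirstOrder.Language.Equiv.refl L M) a = f a; simp
  inv_mul_cancel f := FirstOrder.Language.Equiv.ext fun a => by
    show f.symm.comp f a = FirstOrder.Language.Equiv.refl L M a; simp

@[simp] theorem aut_one_apply (a : M) : (1 : M ≃[L] M) a = a := by
  show FirstOrder.Language.Equiv.refl L M a = a; simp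
@[simp] theorem aut_mul_apply (f g : M ≃[L] M) (a : M) : (f * g) a = f (g a) := rfl
@[simp] theorem aut_inv_apply (f : M ≃[L] M) (a : M) : f⁻¹ a = f.symm a := rfl
@[simp] theorem aut_coe_mul (f g : M ≃[L] M) : ⇑(f * g) = ⇑f ∘ ⇑g := rfl

/-- The natural action of the automorphism group on the structure. -/
instance autAction : MulAction (M ≃[L] M) M where
  smul f a := f a
  one_smul _ := rfl
  mul_smul _ _ _ := rfl

@[simp] theorem aut_smul_def (f : M ≃[L] M) (a : M) : f • a = f a := rfl

/-- The topology of pointwise convergence on the automorphism group (the domain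
being regarded as discrete). -/
instance autTopology : TopologicalSpace (M ≃[L] M) :=
  letI : TopologicalSpace M := ⊥
  TopologicalSpace.induced (fun g => (g : M → M)) Pi.topologicalSpace

/-- The pointwise stabilizer `G_(A)` of a set `A ⊆ M` in `Aut(M)`. -/
def pstab (A : Set M) : Subgroup (M ≃[L] M) where
  carrier := {g | ∀ a ∈ A, g a = a}
  one_mem' := fun _ _ => rfl
  mul_mem' := by
    intro f g hf hg a ha
    simp only [Set.mem_setOf_eq] at *
    rw [aut_mul_apply, hg a ha, hf a ha]
  inv_mem' := by
    intro f hf a ha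
    simp only [Set.mem_setOf_eq] at *
    rw [aut_inv_apply]
    conv_lhs => rw [← hf a ha]
    exact f.symm_apply_apply a

/-- The setwise stabilizer `G_{A}` of a set `A ⊆ M` in `Aut(M)`. -/
def sstab (A : Set M) : Subgroup (M ≃[L] M) where
  carrier := {g | g '' A = A}
  one_mem' := by
    simp only [Set.mem_setOf_eq]
    ext a; simp [Set.mem_image]
  mul_mem' := by
    intro f g hf hg
    simp only [Set.mem_setOf_eq] at *
    rw [aut_coe_mul, Set.image_comp, hg, hf]
  inv_mem' := by
    intro f hf
    simp only [Set.mem_setOf_eq] at *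
    conv_lhs => rw [← hf]
    rw [Set.image_image]
    ext a; constructor
    · rintro ⟨x, hx, rfl⟩
      simpa [f.symm_apply_apply] using hx
    · intro ha
      exact ⟨a, ha, f.symm_apply_apply a⟩

/-- The Galois-algebraic closure of `A ⊆ M`: the set of elements with finite orbit
under the pointwise stabilizer of `A`. -/
def aclg (A : Set M) : Set M :=
  {b | (MulAction.orbit (pstab L M A) b).Finite}

/-- The Galois-definable closure of the empty set: elements fixed by every automorphism. -/
def dclg0 : Set M := {b | ∀ g : M ≃[L] M, g b = b}

/-- `p : K ≃ K'` is an isomorphism between the induced substructures on `K` and `K'`. -/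
def IsPartialIso (K K' : Set M) (p : K ≃ K') : Prop :=
  (∀ {n : ℕ} (f : L.Functions n) (x : Fin n → K),
      ∃ h : FirstOrder.Language.Structure.funMap f (fun i => (x i : M)) ∈ K,
        (p ⟨FirstOrder.Language.Structure.funMap f (fun i => (x i : M)), h⟩ : M) =
          FirstOrder.Language.Structure.funMap f (fun i => (p (x i) : M))) ∧
  (∀ {n : ℕ} (r : L.Relations n) (x : Fin n → K),
      FirstOrder.Language.Structure.RelMap r (fun i => (x i : M)) ↔
        FirstOrder.Language.Structure.RelMap r (fun i => (p (x i) : M)))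

/-- `A(M)`: the collection of Galois-algebraic closures of finite subsets of `M`. -/
def AA : Set (Set M) := {K | ∃ A : Set M, A.Finite ∧ K = aclg L M A}

/-- Hypothesis (H). -/
structure HypH : Prop where
  countable : Countable M
  locallyFinite : ∀ A : Set M, A.Finite → (aclg L M A).Finite
  extendsIso : ∀ (K K' : Set M), K.Finite → K'.Finite →
    aclg L M K = K → aclg L M K' = K' → ∀ p : K ≃ K', IsPartialIso L M K K' p →
      ∃ g : M ≃[L] M, ∀ a : K, g a = (p a : M)
  openSandwich : ∀ H : Subgroup (M ≃[L] M), IsOpen (H : Set (M ≃[L] M)) →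
    ∃! K : Set M, K.Finite ∧ aclg L M K = K ∧ pstab L M K ≤ H ∧ H ≤ sstab L M K


/-- Generalized pointwise stabilizer `G_(K,L)`. -/
def genStab (K : Set M) (Lsub : Subgroup (Equiv.Perm K)) : Subgroup (M ≃[L] M) where
  carrier := {f | ∃ p ∈ Lsub, ∀ a : K, f a = (p a : M)}
  one_mem' := ⟨1, Lsub.one_mem, fun a => by simp⟩
  mul_mem' := by
    rintro f g ⟨p, hp, hfp⟩ ⟨q, hq, hgq⟩
    refine ⟨p * q, Lsub.mul_mem hp hq, fun a => ?_⟩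
    rw [aut_mul_apply, hgq a, hfp (q a)]
    rfl
  inv_mem' := by
    rintro f ⟨p, hp, hfp⟩
    refine ⟨p⁻¹, Lsub.inv_mem hp, fun a => ?_⟩
    have h1 : f ((p⁻¹ a : K) : M) = ((p (p⁻¹ a) : K) : M) := hfp _
    rw [show p (p⁻¹ a) = a from Equiv.apply_symm_apply p a] at h1
    rw [aut_inv_apply, ← h1, FirstOrder.Language.Equiv.symm_apply_apply]

/-- `GS(M)`: the collection of generalized pointwise stabilizers. -/
def GS : Set (Subgroup (M ≃[L] M)) :=
  {H | ∃ K ∈ AA L M, ∃ Lsub : Subgroup (Equiv.Perm K),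
    (∀ p ∈ Lsub, IsPartialIso L M K K (p : K ≃ K)) ∧ H = genStab L M K Lsub}

/-- `PS(M)`: the collection of pointwise stabilizers of members of `A(M)`. -/
def PS : Set (Subgroup (M ≃[L] M)) := {H | ∃ K ∈ AA L M, H = pstab L M K}

/-- The lattice `A₊(M)`. -/
def Aplus : Set (Set M) := AA L M ∪ {dclg0 L M}

/-- Covering relation in `S`. -/
def hasseCovers {α : Type*} (S : Set (Set α)) (A B : Set α) : Prop :=
  A ∈ S ∧ B ∈ S ∧ A ⊂ B ∧ ¬∃ C ∈ S, A ⊂ C ∧ C ⊂ B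

/-- Adjacency in the Hasse diagram of `S`. -/
def hasseAdj {α : Type*} (S : Set (Set α)) (A B : Set α) : Prop :=
  hasseCovers S A B ∨ hasseCovers S B A

/-- `A_k(M)`: members of `A(M)` distinct from `dcl(∅)` at distance `≤ k` from the bottom
of the lattice `A₊(M)` in its Hasse diagram. -/
def Ak (k : ℕ) : Set (Set M) :=
  {K | K ∈ AA L M ∧ K ≠ dclg0 L M ∧ ∃ (j : ℕ) (c : Fin (j + 1) → Set M), j ≤ k ∧
    c 0 = dclg0 L M ∧ c (Fin.last j) = K ∧
    ∀ i : Fin j, hasseAdj (Aplus L M) (c i.castSucc) (c i.succ)}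

/-- `A_k(M)` for `k ≤ ω`, with `A_ω(M) = A(M)`. -/
def AkE (k : ℕ∞) : Set (Set M) :=
  match k with
  | ⊤ => AA L M
  | (k : ℕ) => Ak L M k

/-- `k_M`: the supremum of lengths of strict chains of Galois-algebraic closures of
singletons. -/
noncomputable def kM : ℕ∞ :=
  ⨆ k ∈ {k : ℕ | ∃ a : Fin k → M, ∀ i j : Fin k, i < j → aclg L M {a i} ⊂ aclg L M {a j}},
    (k : ℕ∞)

/-- The domain of the expanded structure `E^ex_M(k)`: triples `(K, p, K')` with
`K, K' ∈ A_k(M)` and `p : K ≅ K'`. -/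
structure ExTriple (k : ℕ∞) where
  K : Set M
  K' : Set M
  hK : K ∈ AkE L M k
  hK' : K' ∈ AkE L M k
  p : K ≃ K'
  iso : IsPartialIso L M K K' p

/-- The unary predicate of `E^ex_M(k)` holding of the identity triples. -/
def IsIdTriple {k : ℕ∞} (t : ExTriple L M k) : Prop :=
  t.K = t.K' ∧ ∀ a : t.K, (t.p a : M) = (a : M)

/-- The `n`-ary relation `E_n` of `E^ex_M(k)`. -/
def ERel {k : ℕ∞} {n : ℕ} (x : Fin n → ExTriple L M k) : Prop :=
  ∃ g : M ≃[L] M, ∀ (i : Fin n) (a : (x i).K), g a = ((x i).p a : M)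

/-- The binary relation `Dom` of `E^ex_M(k)`. -/
def DomRel {k : ℕ∞} (t s : ExTriple L M k) : Prop := IsIdTriple L M s ∧ s.K = t.K

/-- The binary relation `Cod` of `E^ex_M(k)`. -/
def CodRel {k : ℕ∞} (t s : ExTriple L M k) : Prop := IsIdTriple L M s ∧ s.K = t.K'

variable {L M}

/-- A bijection between the domains of `E^ex_M(k)` and `E^ex_N(k)` is an isomorphism
if it preserves the identity-triple predicate, all the relations `E_n`, `Dom` and `Cod`. -/
def IsExIso {L' : FirstOrder.Language} {N : Type*} [L'.Structure N] {k : ℕ∞}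
    (F : ExTriple L M k ≃ ExTriple L' N k) : Prop :=
  (∀ t, IsIdTriple L M t ↔ IsIdTriple L' N (F t)) ∧
  (∀ (n : ℕ) (x : Fin n → ExTriple L M k), ERel L M x ↔ ERel L' N (F ∘ x)) ∧
  (∀ t s, DomRel L M t s ↔ DomRel L' N (F t) (F s)) ∧
  (∀ t s, CodRel L M t s ↔ CodRel L' N (F t) (F s))

variable (L M)

/-- The automorphism group of the expanded structure `E^ex_M(k)`. -/
def exAut (k : ℕ∞) : Subgroup (Equiv.Perm (ExTriple L M k)) where
  carrier := {σ | IsExIso (σ : ExTriple L M k ≃ ExTriple L M k)}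
  one_mem' := by
    refine ⟨fun t => ?_, fun n x => ?_, fun t s => ?_, fun t s => ?_⟩ <;>
      simp [Equiv.Perm.coe_one, Function.comp_def]
  mul_mem' := by
    rintro σ τ ⟨hσ1, hσ2, hσ3, hσ4⟩ ⟨hτ1, hτ2, hτ3, hτ4⟩
    refine ⟨fun t => ?_, fun n x => ?_, fun t s => ?_, fun t s => ?_⟩
    · exact (hτ1 t).trans (hσ1 (τ t))
    · exact (hτ2 n x).trans (hσ2 n (τ ∘ x))
    · exact (hτ3 t s).trans (hσ3 (τ t) (τ s))
    · exact (hτ4 t s).trans (hσ4 (τ t) (τ s))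
  inv_mem' := by
    rintro σ ⟨hσ1, hσ2, hσ3, hσ4⟩
    refine ⟨fun t => ?_, fun n x => ?_, fun t s => ?_, fun t s => ?_⟩
    · have := hσ1 (σ⁻¹ t); simpa using this.symm
    · have := hσ2 n (⇑(σ⁻¹) ∘ x)
      have hx : ⇑σ ∘ ⇑(σ⁻¹) ∘ x = x := by
        funext i; simp
      rw [hx] at this
      exact this.symm
    · have := hσ3 (σ⁻¹ t) (σ⁻¹ s); simpa using this.symm
    · have := hσ4 (σ⁻¹ t) (σ⁻¹ s); simpa using this.symm

/-- The subgroup of topological automorphisms of a topological group. -/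
def topMulAut (G : Type*) [Group G] [TopologicalSpace G] : Subgroup (MulAut G) where
  carrier := {α | Continuous (α : G → G) ∧ Continuous (α.symm : G → G)}
  one_mem' := ⟨continuous_id, continuous_id⟩
  mul_mem' := by
    rintro α β ⟨hα1, hα2⟩ ⟨hβ1, hβ2⟩
    exact ⟨hα1.comp hβ1, hβ2.comp hα2⟩
  inv_mem' := by
    rintro α ⟨h1, h2⟩
    exact ⟨h2, h1⟩

/-- A group isomorphism between topological groups which is a homeomorphism. -/
def IsTopIso {G H : Type*} [Group G] [Group H] [TopologicalSpace G] [TopologicalSpace H]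
    (e : G ≃* H) : Prop :=
  Continuous (e : G → H) ∧ Continuous (e.symm : H → G)

/-- The natural homomorphism from `Aut(M)` to the symmetric group on `M`. -/
def toPerm : (M ≃[L] M) →* Equiv.Perm M where
  toFun g := g.toEquiv
  map_one' := rfl
  map_mul' f g := Equiv.ext fun _ => rfl

/-- The orbit equivalence relation on `n`-tuples. -/
def orbRel (n : ℕ) (x y : Fin n → M) : Prop := ∃ g : M ≃[L] M, ∀ i, g (x i) = y i

/-- The automorphism group of the orbital structure `E_M`: permutations of `M`
preserving each orbit equivalence relation. -/
def autOrbital : Subgroup (Equiv.Perm M) where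
  carrier := {f | ∀ (n : ℕ) (x y : Fin n → M),
    orbRel L M n x y ↔ orbRel L M n (f ∘ x) (f ∘ y)}
  one_mem' := by intro n x y; simp [Equiv.Perm.coe_one]
  mul_mem' := by
    intro f g hf hg n x y
    exact (hg n x y).trans (hf n (g ∘ x) (g ∘ y))
  inv_mem' := by
    intro f hf n x y
    have := hf n (⇑(f⁻¹) ∘ x) (⇑(f⁻¹) ∘ y)
    have hx : ⇑f ∘ ⇑(f⁻¹) ∘ x = x := by funext i; simp
    have hy : ⇑f ∘ ⇑(f⁻¹) ∘ y = y := by funext i; simp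
    rw [hx, hy] at this
    exact this.symm

/-- `Aut°(E_M)`: automorphisms of the orbital structure preserving each orbit
equivalence class. -/
def autOrbitalFix : Subgroup (Equiv.Perm M) where
  carrier := {f | f ∈ autOrbital L M ∧ ∀ (n : ℕ) (x : Fin n → M), orbRel L M n x (f ∘ x)}
  one_mem' := ⟨(autOrbital L M).one_mem, fun n x => ⟨1, fun i => by simp [Equiv.Perm.coe_one]⟩⟩
  mul_mem' := by
    rintro f g ⟨hf, hf2⟩ ⟨hg, hg2⟩
    refine ⟨(autOrbital L M).mul_mem hf hg, fun n x => ?_⟩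
    obtain ⟨a, ha⟩ := hg2 n x
    obtain ⟨b, hb⟩ := hf2 n (g ∘ x)
    exact ⟨b * a, fun i => by rw [aut_mul_apply, ha i, hb i]; rfl⟩
  inv_mem' := by
    rintro f ⟨hf, hf2⟩
    refine ⟨(autOrbital L M).inv_mem hf, fun n x => ?_⟩
    obtain ⟨a, ha⟩ := hf2 n (⇑(f⁻¹) ∘ x)
    refine ⟨a⁻¹, fun i => ?_⟩
    have hi := ha i
    simp only [Function.comp_apply,
      show ∀ y, f (f⁻¹ y) = y from fun y => Equiv.apply_symm_apply f y] at hi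
    rw [← hi, aut_inv_apply, FirstOrder.Language.Equiv.symm_apply_apply]
    rfl

/-- A homogeneous structure: isomorphisms between finite substructures extend to
automorphisms. -/
def Homogeneous : Prop :=
  ∀ (K K' : Set M), K.Finite → K'.Finite → ∀ p : K ≃ K',
    IsPartialIso L M K K' p → ∃ g : M ≃[L] M, ∀ a : K, g a = (p a : M)

/-- Weak elimination of imaginaries, phrased group-theoretically: every open subgroup is
sandwiched between the pointwise and setwise stabilizers of a unique smallest finite
Galois-algebraically closed set. -/
def HasWEI : Prop :=
  ∀ H : Subgroup (M ≃[L] M), IsOpen (H : Set (M ≃[L] M)) →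
    ∃ K : Set M, (K.Finite ∧ aclg L M K = K ∧ pstab L M K ≤ H ∧ H ≤ sstab L M K) ∧
      ∀ K' : Set M, (K'.Finite ∧ aclg L M K' = K' ∧ pstab L M K' ≤ H ∧ H ≤ sstab L M K') →
        K ⊆ K'

/-- No algebraicity: every finite set is Galois-algebraically closed. -/
def NoAlgebraicity : Prop := ∀ A : Set M, A.Finite → aclg L M A = A

/-- The small index property: every subgroup of index `< 2^ℵ₀` is open. -/
def SIP : Prop :=
  ∀ H : Subgroup (M ≃[L] M), Cardinal.mk ((M ≃[L] M) ⧸ H) < Cardinal.continuum →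
    IsOpen (H : Set (M ≃[L] M))

/-- An oligomorphic action: finitely many orbits on `n`-tuples for every `n`. -/
def Oligo (G : Type*) [Group G] (X : Type*) [MulAction G X] : Prop :=
  ∀ n : ℕ, Finite (MulAction.orbitRel.Quotient G (Fin n → X))

end Paper

namespace Paper

/-- ω-categoricity: `M` is, up to isomorphism, the unique countable model of its complete
first-order theory. -/
def IsOmegaCategorical (L : FirstOrder.Language) (M : Type w) [L.Structure M] : Prop :=
  Countable M ∧ ∀ (N : Type w) (iN : L.Structure N), Countable N → Nonempty N →
    (@FirstOrder.Language.Theory.Model L N iN (L.completeTheory M)) →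
      Nonempty (@FirstOrder.Language.Equiv L N M iN _)


section Statement3Proof

variable {L : FirstOrder.Language} {M : Type*} [L.Structure M]

theorem mem_pstab {A : Set M} {g : M ≃[L] M} : g ∈ pstab L M A ↔ ∀ a ∈ A, g a = a :=
  Iff.rfl

theorem mem_pstab_singleton {b : M} {g : M ≃[L] M} : g ∈ pstab L M {b} ↔ g b = b := by
  simp [mem_pstab]

theorem mem_sstab {A : Set M} {g : M ≃[L] M} : g ∈ sstab L M A ↔ ⇑g '' A = A :=
  Iff.rfl

theorem sstab_singleton (b : M) : sstab L M {b} = pstab L M {b} := by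
  ext g
  rw [mem_sstab, mem_pstab_singleton, Set.image_singleton, Set.singleton_eq_singleton_iff]

theorem mem_of_orbit_finite (hnoalg : NoAlgebraicity L M) {A : Set M} (hA : A.Finite)
    {c : M} (h : (MulAction.orbit (pstab L M A) c).Finite) : c ∈ A := by
  rw [← hnoalg A hA]
  exact h

theorem mem_of_orbit_subset (hnoalg : NoAlgebraicity L M) {A : Set M} (hA : A.Finite)
    {c : M} {S : Set M} (hS : S.Finite) (h : MulAction.orbit (pstab L M A) c ⊆ S) : c ∈ A :=
  mem_of_orbit_finite hnoalg hA (hS.subset h)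

theorem exists_move (hnoalg : NoAlgebraicity L M) (a : M) : ∃ g : M ≃[L] M, g a ≠ a := by
  by_contra h
  push_neg at h
  have : a ∈ (∅ : Set M) := by
    apply mem_of_orbit_subset hnoalg Set.finite_empty (Set.finite_singleton a)
    rintro x ⟨g, rfl⟩
    exact Set.mem_singleton_iff.2 (h ↑g)
  exact this

theorem pstab_le_singleton (hnoalg : NoAlgebraicity L M) {S : Set M} (hS : S.Finite) {a : M}
    (h : pstab L M S ≤ pstab L M {a}) : a ∈ S := by
  apply mem_of_orbit_subset hnoalg hS (Set.finite_singleton a)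
  rintro x ⟨g, rfl⟩
  exact Set.mem_singleton_iff.2 (h g.2 a rfl)

theorem pstab_singleton_inj (hnoalg : NoAlgebraicity L M) {a b : M}
    (h : pstab L M {a} = pstab L M {b}) : a = b :=
  (pstab_le_singleton hnoalg (Set.finite_singleton a) (le_of_eq h)).symm

/-! ### Topological facts -/

theorem isOpen_eval (a b : M) : IsOpen {g : M ≃[L] M | g a = b} := by
  letI : TopologicalSpace M := ⊥
  haveI : DiscreteTopology M := discreteTopology_bot M
  have h : {g : M ≃[L] M | g a = b} =
      (fun g : M ≃[L] M => (⇑g : M → M)) ⁻¹' ((fun h : M → M => h a) ⁻¹' {b}) := rfl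
  rw [h]
  exact isOpen_induced ((continuous_apply a).isOpen_preimage _ (isOpen_discrete _))

theorem isOpen_pstab {A : Set M} (hA : A.Finite) :
    IsOpen ((pstab L M A : Set (M ≃[L] M))) := by
  have h : (pstab L M A : Set (M ≃[L] M)) = ⋂ a ∈ A, {g : M ≃[L] M | g a = a} := by
    ext g
    simp [SetLike.mem_coe, mem_pstab]
  rw [h]
  exact hA.isOpen_biInter fun a _ => isOpen_eval a a

theorem continuous_into_aut {X : Type*} [TopologicalSpace X] (q : X → (M ≃[L] M))
    (h : ∀ a b : M, IsOpen {x : X | q x a = b}) : Continuous q := by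
  letI : TopologicalSpace M := ⊥
  apply continuous_induced_rng.2
  apply continuous_pi
  intro a
  rw [continuous_def]
  intro s _
  have hs : (fun x : X => ((fun g : M ≃[L] M => (⇑g : M → M)) ∘ q) x a) ⁻¹' s =
      ⋃ b ∈ s, {x : X | q x a = b} := by
    ext x
    simp only [Set.mem_preimage, Function.comp_apply, Set.mem_iUnion, Set.mem_setOf_eq]
    constructor
    · intro hx; exact ⟨q x a, hx, rfl⟩
    · rintro ⟨b, hb, hb'⟩; rwa [hb']
  rw [hs]
  exact isOpen_biUnion fun b _ => h a b

theorem continuous_mulLeft (h : M ≃[L] M) : Continuous fun g : M ≃[L] M => h * g :=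
  continuous_into_aut _ fun a b => by
    have heq : {g : M ≃[L] M | (h * g) a = b} = {g : M ≃[L] M | g a = h.symm b} := by
      ext g
      rw [Set.mem_setOf_eq, Set.mem_setOf_eq, aut_mul_apply]
      constructor
      · intro hh; rw [← hh, h.symm_apply_apply]
      · intro hh; rw [hh, h.apply_symm_apply]
    rw [heq]
    exact isOpen_eval _ _

/-! ### The key subgroup `D e a = e⁻¹(G_a)` -/

/-- The preimage under `e` of the stabilizer of `a`. -/
def D (e : MulAut (M ≃[L] M)) (a : M) : Subgroup (M ≃[L] M) :=
  Subgroup.comap e.toMonoidHom (pstab L M {a})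

theorem mem_D {e : MulAut (M ≃[L] M)} {a : M} {g : M ≃[L] M} :
    g ∈ D e a ↔ (e g) a = a := by
  simp [D, Subgroup.mem_comap, mem_pstab_singleton]

theorem isOpen_D (e : MulAut (M ≃[L] M)) (hc : Continuous ⇑e) (a : M) :
    IsOpen ((D e a : Set (M ≃[L] M))) := by
  have h : (D e a : Set (M ≃[L] M)) = ⇑e ⁻¹' (pstab L M {a} : Set (M ≃[L] M)) := rfl
  rw [h]
  exact (isOpen_pstab (Set.finite_singleton a)).preimage hc

/-- The key finiteness argument: if `K` sandwiches `e(G_a)` and `K'` sandwiches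
`e⁻¹(G_b)` for some `b ∈ K`, then `K' ⊆ {a}`. -/
theorem sing (hnoalg : NoAlgebraicity L M) (e : MulAut (M ≃[L] M)) {a b : M} {K K' : Set M}
    (hK : K.Finite) (hK' : K'.Finite)
    (s1b : D e.symm a ≤ sstab L M K) (hb : b ∈ K)
    (s2b : D e b ≤ sstab L M K') : K' ⊆ {a} := by
  classical
  intro c hc
  let rep : M → (M ≃[L] M) := fun v =>
    if h : ∃ g : M ≃[L] M, g ∈ pstab L M {a} ∧ (e g) b = v then h.choose else 1
  have hcover : MulAction.orbit (pstab L M {a}) c ⊆ ⋃ v ∈ K, ⇑(rep v) '' K' := by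
    rintro x ⟨g, rfl⟩
    have hg₀ : (↑g : M ≃[L] M) ∈ pstab L M {a} := g.2
    have h1 : e ↑g ∈ D e.symm a := by
      rw [mem_D, MulEquiv.symm_apply_apply]
      exact hg₀ a rfl
    have hv : (e ↑g) b ∈ K := by
      have h2 : ⇑(e ↑g) '' K = K := s1b h1
      rw [← h2]
      exact ⟨b, hb, rfl⟩
    refine Set.mem_biUnion hv ?_
    have hex : ∃ g' : M ≃[L] M, g' ∈ pstab L M {a} ∧ (e g') b = (e ↑g) b := ⟨↑g, hg₀, rfl⟩
    have hrep : rep ((e ↑g) b) ∈ pstab L M {a} ∧ (e (rep ((e ↑g) b))) b = (e ↑g) b := by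
      simpa only [rep, dif_pos hex] using hex.choose_spec
    set r := rep ((e ↑g) b) with hr
    have hd : r⁻¹ * ↑g ∈ D e b := by
      rw [mem_D, map_mul, map_inv, aut_mul_apply, aut_inv_apply, ← hrep.2]
      exact (e r).symm_apply_apply b
    have hK'im : ⇑(r⁻¹ * ↑g) '' K' = K' := s2b hd
    have hc' : (r⁻¹ * ↑g) c ∈ K' := by
      rw [← hK'im]
      exact ⟨c, hc, rfl⟩
    refine ⟨(r⁻¹ * ↑g) c, hc', ?_⟩
    show r ((r⁻¹ * (↑g : M ≃[L] M)) c) = (↑g : M ≃[L] M) c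
    rw [aut_mul_apply, aut_inv_apply]
    exact r.apply_symm_apply _
  exact mem_of_orbit_subset hnoalg (Set.finite_singleton a)
    (hK.biUnion fun v _ => hK'.image _) hcover

theorem exists_point (hwei : HasWEI L M) (hnoalg : NoAlgebraicity L M)
    (e : MulAut (M ≃[L] M)) (hc : Continuous ⇑e) (hc' : Continuous ⇑e.symm) (a : M) :
    ∃ b : M, D e.symm a = pstab L M {b} := by
  obtain ⟨K, ⟨hKfin, -, hs1a, hs1b⟩, -⟩ := hwei (D e.symm a) (isOpen_D e.symm hc' a)
  have hKne : K.Nonempty := by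
    rcases Set.eq_empty_or_nonempty K with h | h
    · exfalso
      obtain ⟨g, hg⟩ := exists_move hnoalg a
      apply hg
      have hmem : e g ∈ D e.symm a := by
        apply hs1a
        subst h
        intro x hx
        exact absurd hx (Set.notMem_empty x)
      rw [mem_D, MulEquiv.symm_apply_apply] at hmem
      exact hmem
    · exact h
  obtain ⟨b, hb⟩ := hKne
  obtain ⟨K', ⟨hK'fin, -, hs2a, hs2b⟩, -⟩ := hwei (D e b) (isOpen_D e hc b)
  have hK'sub : K' ⊆ {a} := sing hnoalg e hKfin hK'fin hs1b hb hs2b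
  have hK'ne : K'.Nonempty := by
    rcases Set.eq_empty_or_nonempty K' with h | h
    · exfalso
      obtain ⟨g, hg⟩ := exists_move hnoalg b
      apply hg
      have hmem : e.symm g ∈ D e b := by
        apply hs2a
        subst h
        intro x hx
        exact absurd hx (Set.notMem_empty x)
      rw [mem_D, MulEquiv.apply_symm_apply] at hmem
      exact hmem
    · exact h
  have hK'eq : K' = {a} := Set.Subset.antisymm hK'sub
    (Set.singleton_subset_iff.2 (hK'sub hK'ne.some_mem ▸ hK'ne.some_mem))
  have ha' : a ∈ K' := by rw [hK'eq]; rfl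
  have hKsub : K ⊆ {b} := by
    refine sing hnoalg e.symm hK'fin hKfin ?_ ha' ?_
    · rw [MulEquiv.symm_symm]
      exact hs2b
    · exact hs1b
  have hKeq : K = {b} := Set.Subset.antisymm hKsub (Set.singleton_subset_iff.2 hb)
  refine ⟨b, le_antisymm ?_ ?_⟩
  · calc D e.symm a ≤ sstab L M K := hs1b
      _ = pstab L M {b} := by rw [hKeq, sstab_singleton]
  · rw [hKeq] at hs1a
    exact hs1a

/-! ### The induced permutation -/

/-- The point `f_e(a)` with `e(G_a) = G_{f_e(a)}`. -/
noncomputable def ff (hwei : HasWEI L M) (hnoalg : NoAlgebraicity L M)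
    (e : MulAut (M ≃[L] M)) (hc : Continuous ⇑e) (hc' : Continuous ⇑e.symm) (a : M) : M :=
  (exists_point hwei hnoalg e hc hc' a).choose

theorem ff_spec (hwei : HasWEI L M) (hnoalg : NoAlgebraicity L M)
    (e : MulAut (M ≃[L] M)) (hc : Continuous ⇑e) (hc' : Continuous ⇑e.symm) (a : M) :
    D e.symm a = pstab L M {ff hwei hnoalg e hc hc' a} :=
  (exists_point hwei hnoalg e hc hc' a).choose_spec

theorem ff_unique (hwei : HasWEI L M) (hnoalg : NoAlgebraicity L M)
    (e : MulAut (M ≃[L] M)) (hc : Continuous ⇑e) (hc' : Continuous ⇑e.symm) {a b : M}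
    (h : D e.symm a = pstab L M {b}) : ff hwei hnoalg e hc hc' a = b :=
  pstab_singleton_inj hnoalg ((ff_spec hwei hnoalg e hc hc' a).symm.trans h)

theorem D_apply (e : MulAut (M ≃[L] M)) (g : M ≃[L] M) (a : M) {b : M}
    (h : D e.symm a = pstab L M {b}) : D e.symm (g a) = pstab L M {(e g) b} := by
  ext x
  rw [mem_D, mem_pstab_singleton]
  have h1 : ((e g)⁻¹ * x * (e g)) ∈ D e.symm a ↔ (e.symm x) (g a) = g a := by
    rw [mem_D]
    have hs : e.symm ((e g)⁻¹ * x * e g) = g⁻¹ * (e.symm x) * g := by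
      rw [map_mul, map_mul, map_inv, MulEquiv.symm_apply_apply]
    rw [hs, aut_mul_apply, aut_mul_apply, aut_inv_apply]
    constructor
    · intro hh
      have := congrArg ⇑g hh
      rwa [g.apply_symm_apply] at this
    · intro hh
      rw [hh]
      exact g.symm_apply_apply a
  have h2 : ((e g)⁻¹ * x * (e g)) ∈ pstab L M {b} ↔ x ((e g) b) = (e g) b := by
    rw [mem_pstab_singleton, aut_mul_apply, aut_mul_apply, aut_inv_apply]
    constructor
    · intro hh
      have := congrArg ⇑(e g) hh
      rwa [(e g).apply_symm_apply] at this
    · intro hh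
      rw [hh]
      exact (e g).symm_apply_apply b
  rw [← h1, h, h2]

theorem ff_equiv (hwei : HasWEI L M) (hnoalg : NoAlgebraicity L M)
    (e : MulAut (M ≃[L] M)) (hc : Continuous ⇑e) (hc' : Continuous ⇑e.symm)
    (g : M ≃[L] M) (a : M) :
    ff hwei hnoalg e hc hc' (g a) = (e g) (ff hwei hnoalg e hc hc' a) :=
  ff_unique hwei hnoalg e hc hc' (D_apply e g a (ff_spec hwei hnoalg e hc hc' a))

theorem D_symm (hwei : HasWEI L M) (hnoalg : NoAlgebraicity L M)
    (e : MulAut (M ≃[L] M)) (hc : Continuous ⇑e) (hc' : Continuous ⇑e.symm) (a : M) :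
    D e (ff hwei hnoalg e hc hc' a) = pstab L M {a} := by
  ext g
  rw [mem_D, mem_pstab_singleton]
  have h1 : (e g) (ff hwei hnoalg e hc hc' a) = ff hwei hnoalg e hc hc' a ↔
      e g ∈ D e.symm a := by
    rw [ff_spec hwei hnoalg e hc hc' a, mem_pstab_singleton]
  rw [h1, mem_D, MulEquiv.symm_apply_apply]

theorem ff_symm_ff (hwei : HasWEI L M) (hnoalg : NoAlgebraicity L M)
    (e : MulAut (M ≃[L] M)) (hc : Continuous ⇑e) (hc' : Continuous ⇑e.symm)
    (hc'' : Continuous ⇑e.symm.symm) (a : M) :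
    ff hwei hnoalg e.symm hc' hc'' (ff hwei hnoalg e hc hc' a) = a := by
  apply ff_unique
  rw [MulEquiv.symm_symm]
  exact D_symm hwei hnoalg e hc hc' a

theorem ff_ff_symm (hwei : HasWEI L M) (hnoalg : NoAlgebraicity L M)
    (e : MulAut (M ≃[L] M)) (hc : Continuous ⇑e) (hc' : Continuous ⇑e.symm)
    (hc'' : Continuous ⇑e.symm.symm) (a : M) :
    ff hwei hnoalg e hc hc' (ff hwei hnoalg e.symm hc' hc'' a) = a := by
  apply ff_unique
  exact D_symm hwei hnoalg e.symm hc' hc'' a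

/-- The permutation of `M` induced by a topological automorphism of `Aut(M)`. -/
noncomputable def FF (hwei : HasWEI L M) (hnoalg : NoAlgebraicity L M)
    (e : MulAut (M ≃[L] M)) (hc : Continuous ⇑e) (hc' : Continuous ⇑e.symm) :
    Equiv.Perm M where
  toFun := ff hwei hnoalg e hc hc'
  invFun := ff hwei hnoalg e.symm hc' (by rw [MulEquiv.symm_symm]; exact hc)
  left_inv a := ff_symm_ff hwei hnoalg e hc hc' _ a
  right_inv a := ff_ff_symm hwei hnoalg e hc hc' _ a

theorem FF_mem (hwei : HasWEI L M) (hnoalg : NoAlgebraicity L M)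
    (e : MulAut (M ≃[L] M)) (hc : Continuous ⇑e) (hc' : Continuous ⇑e.symm) :
    FF hwei hnoalg e hc hc' ∈ autOrbital L M := by
  intro n x y
  constructor
  · rintro ⟨g, hg⟩
    refine ⟨e g, fun i => ?_⟩
    show (e g) (ff hwei hnoalg e hc hc' (x i)) = ff hwei hnoalg e hc hc' (y i)
    rw [← ff_equiv hwei hnoalg e hc hc' g (x i), hg i]
  · rintro ⟨h, hh⟩
    refine ⟨e.symm h, fun i => ?_⟩
    have hX : Continuous ⇑e.symm.symm := by rw [MulEquiv.symm_symm]; exact hc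
    have h1 : ff hwei hnoalg e.symm hc' hX (ff hwei hnoalg e hc hc' (x i)) = x i :=
      ff_symm_ff hwei hnoalg e hc hc' hX (x i)
    have h2 := (ff_equiv hwei hnoalg e.symm hc' hX h (ff hwei hnoalg e hc hc' (x i))).symm
    rw [h1] at h2
    have h3 : h (ff hwei hnoalg e hc hc' (x i)) = ff hwei hnoalg e hc hc' (y i) := hh i
    rw [h2, h3]
    exact ff_symm_ff hwei hnoalg e hc hc' hX (y i)

/-! ### Conjugation by an orbit-preserving permutation -/

theorem autOrbital_iff {f : Equiv.Perm M} (hf : f ∈ autOrbital L M) :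
    ∀ (n : ℕ) (x y : Fin n → M), orbRel L M n x y ↔ orbRel L M n (⇑f ∘ x) (⇑f ∘ y) :=
  hf

theorem exists_agree {f : Equiv.Perm M} (hf : f ∈ autOrbital L M) (g : M ≃[L] M)
    {n : ℕ} (x : Fin n → M) : ∃ g' : M ≃[L] M, ∀ i, g' (x i) = f (g (f⁻¹ (x i))) := by
  have h0 : orbRel L M n (⇑f⁻¹ ∘ x) (⇑g ∘ ⇑f⁻¹ ∘ x) := ⟨g, fun i => rfl⟩
  rw [autOrbital_iff hf n _ _] at h0
  obtain ⟨g', hg'⟩ := h0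
  refine ⟨g', fun i => ?_⟩
  have := hg' i
  simpa only [Function.comp_apply, (show ∀ y, f (f⁻¹ y) = y from fun y => Equiv.apply_symm_apply f y)] using this

/-- Conjugation of an automorphism by an orbit-preserving permutation. -/
noncomputable def conjAut {f : Equiv.Perm M} (hf : f ∈ autOrbital L M) (g : M ≃[L] M) :
    M ≃[L] M where
  toEquiv := ((f⁻¹ : Equiv.Perm M) : M ≃ M).trans (g.toEquiv.trans (f : M ≃ M))
  map_fun' := by
    intro n F x
    obtain ⟨g', hg'⟩ := exists_agree hf g
      (Fin.snoc x (FirstOrder.Language.Structure.funMap F x) : Fin (n + 1) → M)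
    have hx : ∀ i : Fin n, f (g (f⁻¹ (x i))) = g' (x i) := fun i => by
      have := hg' i.castSucc
      rw [Fin.snoc_castSucc] at this
      exact this.symm
    have hlast := hg' (Fin.last n)
    rw [Fin.snoc_last] at hlast
    show f (g (f⁻¹ (FirstOrder.Language.Structure.funMap F x))) =
      FirstOrder.Language.Structure.funMap F fun i => f (g (f⁻¹ (x i)))
    rw [← hlast, g'.map_fun]
    congr 1
    funext i
    exact (hx i).symm
  map_rel' := by
    intro n r x
    obtain ⟨g', hg'⟩ := exists_agree hf g x
    have hx : (fun i => f (g (f⁻¹ (x i)))) = fun i => g' (x i) := by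
      funext i
      exact (hg' i).symm
    show FirstOrder.Language.Structure.RelMap r (fun i => f (g (f⁻¹ (x i)))) ↔
      FirstOrder.Language.Structure.RelMap r x
    rw [hx]
    exact g'.map_rel r x

@[simp] theorem conjAut_apply {f : Equiv.Perm M} (hf : f ∈ autOrbital L M)
    (g : M ≃[L] M) (a : M) : conjAut hf g a = f (g (f⁻¹ a)) := rfl

/-- Conjugation as an automorphism of `Aut(M)`. -/
noncomputable def conjMulAut {f : Equiv.Perm M} (hf : f ∈ autOrbital L M) :
    MulAut (M ≃[L] M) :=
  MulEquiv.mk'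
    ⟨conjAut hf, conjAut ((autOrbital L M).inv_mem hf),
      fun g => FirstOrder.Language.Equiv.ext fun a => by
        show f⁻¹ ((f (g (f⁻¹ ((f⁻¹)⁻¹ a)))) ) = g a
        simp,
      fun g => FirstOrder.Language.Equiv.ext fun a => by
        show f (f⁻¹ (g ((f⁻¹)⁻¹ (f⁻¹ a)))) = g a
        simp⟩
    (fun g₁ g₂ => FirstOrder.Language.Equiv.ext fun a => by
      show f ((g₁ * g₂) (f⁻¹ a)) = f (g₁ (f⁻¹ (f (g₂ (f⁻¹ a)))))
      simp)

@[simp] theorem conjMulAut_apply {f : Equiv.Perm M} (hf : f ∈ autOrbital L M)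
    (g : M ≃[L] M) (a : M) : (conjMulAut hf g) a = f (g (f⁻¹ a)) := rfl

@[simp] theorem conjMulAut_symm_apply {f : Equiv.Perm M} (hf : f ∈ autOrbital L M)
    (g : M ≃[L] M) (a : M) : ((conjMulAut hf).symm g) a = f⁻¹ (g ((f⁻¹)⁻¹ a)) := rfl

theorem continuous_conj {f : Equiv.Perm M} (hf : f ∈ autOrbital L M) :
    Continuous ⇑(conjMulAut hf) :=
  continuous_into_aut _ fun a b => by
    have heq : {g : M ≃[L] M | (conjMulAut hf g) a = b} = {g : M ≃[L] M | g (f⁻¹ a) = f⁻¹ b} := by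
      ext g
      simp only [Set.mem_setOf_eq, conjMulAut_apply]
      constructor
      · intro h; rw [← h, (show ∀ y, f⁻¹ (f y) = y from fun y => Equiv.symm_apply_apply f y)]
      · intro h; rw [h, (show ∀ y, f (f⁻¹ y) = y from fun y => Equiv.apply_symm_apply f y)]
    rw [heq]
    exact isOpen_eval _ _

theorem continuous_conj_symm {f : Equiv.Perm M} (hf : f ∈ autOrbital L M) :
    Continuous ⇑(conjMulAut hf).symm :=
  continuous_into_aut _ fun a b => by
    have heq : {g : M ≃[L] M | ((conjMulAut hf).symm g) a = b} =
        {g : M ≃[L] M | g (f a) = f b} := by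
      ext g
      simp only [Set.mem_setOf_eq, conjMulAut_symm_apply, inv_inv]
      constructor
      · intro h; rw [← h, (show ∀ y, f (f⁻¹ y) = y from fun y => Equiv.apply_symm_apply f y)]
      · intro h; rw [h, (show ∀ y, f⁻¹ (f y) = y from fun y => Equiv.symm_apply_apply f y)]
    rw [heq]
    exact isOpen_eval _ _

theorem mem_topMulAut {G : Type*} [Group G] [TopologicalSpace G] {α : MulAut G} :
    α ∈ topMulAut G ↔ Continuous (⇑α : G → G) ∧ Continuous (⇑α.symm : G → G) :=
  Iff.rfl

theorem ff_conj (hwei : HasWEI L M) (hnoalg : NoAlgebraicity L M) {f : Equiv.Perm M}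
    (hf : f ∈ autOrbital L M) (hc : Continuous ⇑(conjMulAut hf))
    (hc' : Continuous ⇑(conjMulAut hf).symm) (a : M) :
    ff hwei hnoalg (conjMulAut hf) hc hc' a = f a := by
  apply ff_unique
  ext g
  rw [mem_D, mem_pstab_singleton]
  show f⁻¹ (g ((f⁻¹)⁻¹ a)) = a ↔ g (f a) = f a
  rw [inv_inv]
  constructor
  · intro h
    have := congrArg ⇑f h
    rwa [(show ∀ y, f (f⁻¹ y) = y from fun y => Equiv.apply_symm_apply f y)] at this
  · intro h
    rw [h, (show ∀ y, f⁻¹ (f y) = y from fun y => Equiv.symm_apply_apply f y)]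

/-! ### The main isomorphism -/

/-- The isomorphism between the topological automorphism group of `Aut(M)` and the
automorphism group of the orbital structure. -/
noncomputable def mainIso (hwei : HasWEI L M) (hnoalg : NoAlgebraicity L M) :
    ↥(topMulAut (M ≃[L] M)) ≃* ↥(autOrbital L M) where
  toFun α := ⟨FF hwei hnoalg α.1 α.2.1 α.2.2, FF_mem hwei hnoalg α.1 α.2.1 α.2.2⟩
  invFun f := ⟨conjMulAut f.2, continuous_conj f.2, continuous_conj_symm f.2⟩
  left_inv α := by
    apply Subtype.ext
    apply MulEquiv.ext
    intro g
    apply FirstOrder.Language.Equiv.ext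
    intro a
    show FF hwei hnoalg α.1 α.2.1 α.2.2
        (g ((FF hwei hnoalg α.1 α.2.1 α.2.2)⁻¹ a)) = (α.1 g) a
    have hX : Continuous ⇑α.1.symm.symm := by rw [MulEquiv.symm_symm]; exact α.2.1
    have h0 : (FF hwei hnoalg α.1 α.2.1 α.2.2)⁻¹ a =
        ff hwei hnoalg α.1.symm α.2.2 hX a := rfl
    rw [h0]
    show ff hwei hnoalg α.1 α.2.1 α.2.2 (g (ff hwei hnoalg α.1.symm α.2.2 hX a)) = (α.1 g) a
    rw [ff_equiv hwei hnoalg α.1 α.2.1 α.2.2 g, ff_ff_symm hwei hnoalg α.1 α.2.1 α.2.2 hX a]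
  right_inv f := by
    apply Subtype.ext
    apply Equiv.ext
    intro a
    exact ff_conj hwei hnoalg f.2 (continuous_conj f.2) (continuous_conj_symm f.2) a
  map_mul' α β := by
    apply Subtype.ext
    apply Equiv.ext
    intro a
    show ff hwei hnoalg (α.1 * β.1) (α * β).2.1 (α * β).2.2 a =
      ff hwei hnoalg α.1 α.2.1 α.2.2 (ff hwei hnoalg β.1 β.2.1 β.2.2 a)
    apply ff_unique
    ext g
    rw [mem_D, mem_pstab_singleton]
    have h0 : (α.1 * β.1).symm g = β.1.symm (α.1.symm g) := by
      rw [← MulAut.inv_def, mul_inv_rev, MulAut.mul_apply, MulAut.inv_def, MulAut.inv_def]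
    rw [h0]
    have h1 : (β.1.symm (α.1.symm g)) a = a ↔ α.1.symm g ∈ D β.1.symm a := mem_D.symm
    rw [ff_spec hwei hnoalg β.1 β.2.1 β.2.2 a, mem_pstab_singleton] at h1
    have h2 : (α.1.symm g) (ff hwei hnoalg β.1 β.2.1 β.2.2 a) =
        ff hwei hnoalg β.1 β.2.1 β.2.2 a ↔
        g ∈ D α.1.symm (ff hwei hnoalg β.1 β.2.1 β.2.2 a) := mem_D.symm
    rw [ff_spec hwei hnoalg α.1 α.2.1 α.2.2 (ff hwei hnoalg β.1 β.2.1 β.2.2 a),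
      mem_pstab_singleton] at h2
    rw [h1, h2]

/-! ### The SIP part -/

theorem quotient_lt_continuum (hM : Countable M) (F : (M ≃[L] M) →* (M ≃[L] M)) (a : M) :
    Cardinal.mk ((M ≃[L] M) ⧸ Subgroup.comap F (pstab L M {a})) < Cardinal.continuum := by
  have hwd : ∀ g₁ g₂ : M ≃[L] M,
      QuotientGroup.leftRel (Subgroup.comap F (pstab L M {a})) g₁ g₂ →
      (F g₁) a = (F g₂) a := by
    intro g₁ g₂ h
    rw [QuotientGroup.leftRel_apply] at h
    have h2 : (F (g₁⁻¹ * g₂)) a = a := (Subgroup.mem_comap.1 h) a rfl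
    rw [map_mul, map_inv, aut_mul_apply, aut_inv_apply] at h2
    have h3 := congrArg ⇑(F g₁) h2
    rw [(F g₁).apply_symm_apply] at h3
    exact h3.symm
  let φ : ((M ≃[L] M) ⧸ Subgroup.comap F (pstab L M {a})) → M :=
    fun q => Quotient.liftOn' q (fun g => (F g) a) hwd
  have hinj : Function.Injective φ := by
    intro q₁ q₂
    refine Quotient.inductionOn₂' q₁ q₂ ?_
    intro g₁ g₂ h
    apply Quotient.sound'
    refine QuotientGroup.leftRel_apply.mpr (Subgroup.mem_comap.2 ?_)
    intro x hx
    rw [Set.mem_singleton_iff] at hx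
    rw [hx]
    have h' : (F g₁) a = (F g₂) a := h
    rw [map_mul, map_inv, aut_mul_apply, aut_inv_apply, ← h']
    exact (F g₁).symm_apply_apply a
  calc Cardinal.mk ((M ≃[L] M) ⧸ Subgroup.comap F (pstab L M {a}))
      ≤ Cardinal.mk M := Cardinal.mk_le_of_injective hinj
    _ ≤ Cardinal.aleph0 := Cardinal.mk_le_aleph0
    _ < Cardinal.continuum := Cardinal.aleph0_lt_continuum

theorem continuous_of_sip (hM : Countable M) (hsip : SIP L M) (α : MulAut (M ≃[L] M)) :
    Continuous ⇑α := by
  apply continuous_into_aut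
  intro a b
  by_cases hne : ∃ g₀ : M ≃[L] M, (α g₀) a = b
  · obtain ⟨g₀, hg₀⟩ := hne
    have hopen : IsOpen ((Subgroup.comap α.toMonoidHom (pstab L M {a}) : Set (M ≃[L] M))) :=
      hsip _ (quotient_lt_continuum hM α.toMonoidHom a)
    have heq : {g : M ≃[L] M | (α g) a = b} =
        (fun g => g₀⁻¹ * g) ⁻¹' (Subgroup.comap α.toMonoidHom (pstab L M {a})) := by
      ext g
      simp only [Set.mem_preimage, SetLike.mem_coe, Subgroup.mem_comap, Set.mem_setOf_eq,
        MulEquiv.coe_toMonoidHom]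
      rw [show (α (g₀⁻¹ * g) ∈ pstab L M {a}) ↔ (α (g₀⁻¹ * g)) a = a from mem_pstab_singleton]
      rw [map_mul, map_inv, aut_mul_apply, aut_inv_apply]
      constructor
      · intro h
        rw [h, ← hg₀]
        exact (α g₀).symm_apply_apply a
      · intro h
        have := congrArg ⇑(α g₀) h
        rwa [(α g₀).apply_symm_apply, hg₀] at this
    rw [heq]
    exact hopen.preimage (continuous_mulLeft g₀⁻¹)
  · push_neg at hne
    have heq : {g : M ≃[L] M | (α g) a = b} = ∅ := by
      ext g
      simp only [Set.mem_setOf_eq, Set.mem_empty_iff_false, iff_false]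
      exact hne g
    rw [heq]
    exact isOpen_empty

/-- Under SIP every abstract automorphism of `Aut(M)` is topological. -/
noncomputable def sipIso (hM : Countable M) (hsip : SIP L M) :
    MulAut (M ≃[L] M) ≃* ↥(topMulAut (M ≃[L] M)) where
  toFun α := ⟨α, continuous_of_sip hM hsip α, by
    have := continuous_of_sip hM hsip α⁻¹
    rwa [MulAut.inv_def] at this⟩
  invFun := Subtype.val
  left_inv _ := rfl
  right_inv _ := rfl
  map_mul' _ _ := rfl

end Statement3Proof

/-- If `M` is a countable ω-categorical homogeneous structure with weak
elimination of imaginaries and no algebraicity, then the group of topological automorphisms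
of `Aut(M)` is isomorphic to `Aut(E_M)`; if in addition `M` has the small index property,
then `Aut(Aut(M)) ≅ Aut(E_M)`. -/
theorem stmt_3 (L : FirstOrder.Language) (M : Type w) [L.Structure M]
    (hcat : IsOmegaCategorical L M) (hhom : Homogeneous L M) (hwei : HasWEI L M)
    (hnoalg : NoAlgebraicity L M) :
    Nonempty (↥(topMulAut (M ≃[L] M)) ≃* ↥(autOrbital L M)) ∧
    (SIP L M → Nonempty (MulAut (M ≃[L] M) ≃* ↥(autOrbital L M))) := by
  refine ⟨⟨mainIso hwei hnoalg⟩, fun hsip => ⟨?_⟩⟩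
  exact (sipIso hcat.1 hsip).trans (mainIso hwei hnoalg)

end Paper
end

section
/- Having weak elimination of imaginaries is a Borel property of ω-categorical structures: the set of oligomorphic closed subgroups G of Sym(ω) whose canonical structure M_G has weak elimination of imaginaries is a Borel subset of the Effros standard Borel space of closed subgroups of Sym(ω). -/
namespace Paper

/-- The Polish group topology on `Sym(ω)` (pointwise convergence, refined so that
inversion is continuous; the open subgroups are the same). -/
instance permTopology : TopologicalSpace (Equiv.Perm ℕ) :=
  letI : TopologicalSpace ℕ := ⊥
  TopologicalSpace.induced
    (fun g => ((g : ℕ → ℕ), ((g⁻¹ : Equiv.Perm ℕ) : ℕ → ℕ))) inferInstance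

/-- The pointwise stabilizer of `A ⊆ ω` inside a subgroup `G ≤ Sym(ω)`. -/
def stabIn (G : Subgroup (Equiv.Perm ℕ)) (A : Set ℕ) : Subgroup G where
  carrier := {g | ∀ a ∈ A, (g : Equiv.Perm ℕ) a = a}
  one_mem' := fun a _ => rfl
  mul_mem' := by
    intro f g hf hg a ha
    have h1 := hg a ha
    have h2 := hf a ha
    simp only [Set.mem_setOf_eq, Subgroup.coe_mul, Equiv.Perm.coe_mul, Function.comp_apply]
    rw [h1, h2]
  inv_mem' := by
    intro g hg a ha
    have h1 := hg a ha
    simp only [Set.mem_setOf_eq, InvMemClass.coe_inv]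
    conv_lhs => rw [← h1]
    simp

/-- The setwise stabilizer of `A ⊆ ω` inside a subgroup `G ≤ Sym(ω)`. -/
def sstabIn (G : Subgroup (Equiv.Perm ℕ)) (A : Set ℕ) : Subgroup G where
  carrier := {g | (g : Equiv.Perm ℕ) '' A = A}
  one_mem' := by
    simp only [Set.mem_setOf_eq, OneMemClass.coe_one, Equiv.Perm.coe_one, Set.image_id]
  mul_mem' := by
    intro f g hf hg
    simp only [Set.mem_setOf_eq, Subgroup.coe_mul, Equiv.Perm.coe_mul] at *
    rw [Set.image_comp, hg, hf]
  inv_mem' := by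
    intro f hf
    simp only [Set.mem_setOf_eq, InvMemClass.coe_inv] at *
    conv_lhs => rw [← hf]
    rw [Set.image_image]
    ext a
    constructor
    · rintro ⟨x, hx, rfl⟩
      simpa using hx
    · intro ha
      exact ⟨a, ha, by simp⟩

/-- The Galois-algebraic closure of `A ⊆ ω` with respect to `G ≤ Sym(ω)`: the elements
whose orbit under the pointwise stabilizer of `A` in `G` is finite. -/
def aclIn (G : Subgroup (Equiv.Perm ℕ)) (A : Set ℕ) : Set ℕ :=
  {b | (MulAction.orbit (stabIn G A) b).Finite}

/-- `G ≤ Sym(ω)` is oligomorphic: finitely many orbits on `ωⁿ` for every `n`. -/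
def IsOligomorphic (G : Subgroup (Equiv.Perm ℕ)) : Prop :=
  ∀ n : ℕ, Finite (MulAction.orbitRel.Quotient G (Fin n → ℕ))

/-- Weak elimination of imaginaries for the canonical (ω-categorical) structure of
`G ≤ Sym(ω)`, phrased group-theoretically: every open subgroup of `G` lies between the
pointwise and the setwise stabilizer of a unique smallest finite Galois-algebraically
closed subset of `ω`. -/
def HasWEIgrp (G : Subgroup (Equiv.Perm ℕ)) : Prop :=
  ∀ H : Subgroup G, IsOpen (H : Set G) →
    ∃ K : Set ℕ, (K.Finite ∧ aclIn G K = K ∧ stabIn G K ≤ H ∧ H ≤ sstabIn G K) ∧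
      ∀ K' : Set ℕ,
        (K'.Finite ∧ aclIn G K' = K' ∧ stabIn G K' ≤ H ∧ H ≤ sstabIn G K') → K ⊆ K'

/-- The space of closed subgroups of `Sym(ω)`. -/
def ClosedSubgroups : Type :=
  {G : Subgroup (Equiv.Perm ℕ) // IsClosed (G : Set (Equiv.Perm ℕ))}

/-- The Effros Borel structure on the space of closed subgroups of `Sym(ω)`, generated by
the sets `{F : F ∩ U ≠ ∅}` for `U` open. -/
instance effros : MeasurableSpace ClosedSubgroups :=
  MeasurableSpace.generateFrom
    {S | ∃ U : Set (Equiv.Perm ℕ), IsOpen U ∧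
      S = {G : ClosedSubgroups | (((G.1 : Subgroup (Equiv.Perm ℕ)) : Set (Equiv.Perm ℕ)) ∩ U).Nonempty}}

/-- The Borel space of oligomorphic closed subgroups of `Sym(ω)` whose canonical
structure has weak elimination of imaginaries. -/
def OligWEISpace : Type :=
  {G : ClosedSubgroups // IsOligomorphic G.1 ∧ HasWEIgrp G.1}

instance : MeasurableSpace OligWEISpace := by unfold OligWEISpace; infer_instance

/-- Topological isomorphism of two subgroups of `Sym(ω)`: a group isomorphism which is a
homeomorphism for the subspace topologies. -/
def TopIso (G H : Subgroup (Equiv.Perm ℕ)) : Prop :=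
  ∃ e : G ≃* H, Continuous (e : G → H) ∧ Continuous (e.symm : H → G)


/-- The canonical language of a permutation group `G ≤ Sym(ω)`: one `n`-ary relation
symbol for each orbit of `G` on `ωⁿ`. -/
def canonicalLanguage (G : Subgroup (Equiv.Perm ℕ)) : FirstOrder.Language where
  Functions := fun _ => Empty
  Relations := fun n => Quotient (MulAction.orbitRel G (Fin n → ℕ))

/-- The canonical structure `M_G` of `G ≤ Sym(ω)`: each orbit relation symbol names the
corresponding orbit. -/
instance canonicalStructure (G : Subgroup (Equiv.Perm ℕ)) :
    (canonicalLanguage G).Structure ℕ where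
  funMap := fun f _ => f.elim
  RelMap := fun {n} r x => Quotient.mk (MulAction.orbitRel G (Fin n → ℕ)) x = r

/-- Weak elimination of imaginaries for a structure `A`: for every formula
`θ(x̄, ȳ)` defining an equivalence relation on `n`-tuples there is a formula `φ(x̄, z̄)`
such that each `θ`-class is of the form `φ(Aⁿ, b̄)` for exactly the parameters `b̄` in some
finite nonempty set `X`. -/
def HasWEIFormulas (L : FirstOrder.Language) (A : Type*) [L.Structure A] : Prop :=
  ∀ (n : ℕ) (θ : L.Formula (Fin n ⊕ Fin n)),
    (Equivalence fun x y : Fin n → A => θ.Realize (Sum.elim x y)) →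
    ∃ (m : ℕ) (φ : L.Formula (Fin n ⊕ Fin m)), ∀ a : Fin n → A,
      ∃ X : Set (Fin m → A), X.Finite ∧ X.Nonempty ∧
        ∀ b : Fin m → A,
          ({x : Fin n → A | θ.Realize (Sum.elim x a)} =
            {x : Fin n → A | φ.Realize (Sum.elim x b)}) ↔ b ∈ X

section Aux

open FirstOrder FirstOrder.Language MulAction

/-- A fixed countable language uniformly coding all the canonical languages. -/
def L0 : FirstOrder.Language where
  Functions := fun _ => Empty
  Relations := fun n => Fin n → ℕ

instance (n : ℕ) : IsEmpty (L0.Functions n) := inferInstanceAs (IsEmpty Empty)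
instance : IsEmpty (Σ l, L0.Functions l) := ⟨fun x => x.2.elim⟩
instance (n : ℕ) : Countable (L0.Relations n) := inferInstanceAs (Countable (Fin n → ℕ))
instance : Countable (Σ n, L0.Relations n) := inferInstanceAs (Countable (Σ n, Fin n → ℕ))

instance {α : Type} [Countable α] : Countable (Σ k, L0.BoundedFormula α k) :=
  BoundedFormula.listEncode_sigma_injective.countable

instance {α : Type} [Countable α] (n : ℕ) : Countable (L0.BoundedFormula α n) :=
  Function.Injective.countable
    (f := fun φ => (⟨n, φ⟩ : Σ k, L0.BoundedFormula α k)) sigma_mk_injective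

instance {α : Type} [Countable α] : Countable (L0.Formula α) :=
  inferInstanceAs (Countable (L0.BoundedFormula α 0))

/-- The uniform coding structure on `ℕ` for a subgroup `G`. -/
def str (G : Subgroup (Equiv.Perm ℕ)) : L0.Structure ℕ where
  funMap := fun f _ => f.elim
  RelMap := fun {n} r x =>
    Quotient.mk (MulAction.orbitRel G (Fin n → ℕ)) x =
      Quotient.mk (MulAction.orbitRel G (Fin n → ℕ)) r

instance (G : Subgroup (Equiv.Perm ℕ)) (n : ℕ) :
    IsEmpty ((canonicalLanguage G).Functions n) := inferInstanceAs (IsEmpty Empty)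

def ofL0 (G : Subgroup (Equiv.Perm ℕ)) : L0 →ᴸ canonicalLanguage G where
  onRelation := fun {n} r => Quotient.mk (MulAction.orbitRel G (Fin n → ℕ)) r

noncomputable def toL0 (G : Subgroup (Equiv.Perm ℕ)) : canonicalLanguage G →ᴸ L0 where
  onRelation := fun {n} r => r.out

lemma ofL0_expansion (G : Subgroup (Equiv.Perm ℕ)) :
    @FirstOrder.Language.LHom.IsExpansionOn L0 (canonicalLanguage G) (ofL0 G) ℕ
      (str G) (canonicalStructure G) :=
  letI := str G
  { map_onRelation := fun {n} R x => rfl }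

lemma toL0_expansion (G : Subgroup (Equiv.Perm ℕ)) :
    @FirstOrder.Language.LHom.IsExpansionOn (canonicalLanguage G) L0 (toL0 G) ℕ
      (canonicalStructure G) (str G) :=
  letI := str G
  { map_onRelation := fun {n} R x => by
      show (Quotient.mk _ x = Quotient.mk _ R.out) = (Quotient.mk _ x = R)
      exact congrArg (fun y => (Quotient.mk _ x = y))
        (Quotient.out_eq (R : Quotient (MulAction.orbitRel G (Fin n → ℕ)))) }

end Aux


section Aux2
open FirstOrder FirstOrder.Language MulAction

/- measurability combinators -/

lemma measSet_congr {p q : ClosedSubgroups → Prop} (h : ∀ G, p G ↔ q G)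
    (hq : MeasurableSet {G | q G}) : MeasurableSet {G | p G} := by
  have : {G | p G} = {G | q G} := Set.ext h
  rw [this]; exact hq

lemma measSet_const (p : Prop) : MeasurableSet {G : ClosedSubgroups | p} := by
  by_cases h : p
  · have : {G : ClosedSubgroups | p} = Set.univ := by ext; simpa
    rw [this]; exact MeasurableSet.univ
  · have : {G : ClosedSubgroups | p} = ∅ := by ext; simpa
    rw [this]; exact MeasurableSet.empty

lemma meas_forall {ι : Sort*} [Countable ι] {p : ι → ClosedSubgroups → Prop}
    (h : ∀ i, MeasurableSet {G | p i G}) : MeasurableSet {G | ∀ i, p i G} := by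
  rw [Set.setOf_forall]; exact MeasurableSet.iInter h

lemma meas_exists {ι : Sort*} [Countable ι] {p : ι → ClosedSubgroups → Prop}
    (h : ∀ i, MeasurableSet {G | p i G}) : MeasurableSet {G | ∃ i, p i G} := by
  rw [Set.setOf_exists]; exact MeasurableSet.iUnion h

lemma meas_and {p q : ClosedSubgroups → Prop} (hp : MeasurableSet {G | p G})
    (hq : MeasurableSet {G | q G}) : MeasurableSet {G | p G ∧ q G} := by
  have : {G | p G ∧ q G} = {G | p G} ∩ {G | q G} := rfl
  rw [this]; exact hp.inter hq

lemma meas_imp {p q : ClosedSubgroups → Prop} (hp : MeasurableSet {G | p G})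
    (hq : MeasurableSet {G | q G}) : MeasurableSet {G | p G → q G} := by
  have : {G | p G → q G} = {G | p G}ᶜ ∪ {G | q G} := by
    ext G; simp [imp_iff_not_or]
  rw [this]; exact hp.compl.union hq

lemma meas_iff {p q : ClosedSubgroups → Prop} (hp : MeasurableSet {G | p G})
    (hq : MeasurableSet {G | q G}) : MeasurableSet {G | p G ↔ q G} := by
  have : {G | p G ↔ q G} = ({G | p G} ∩ {G | q G}) ∪ ({G | p G}ᶜ ∩ {G | q G}ᶜ) := by
    ext G; simp [iff_iff_implies_and_implies]; tauto
  rw [this]; exact (hp.inter hq).union (hp.compl.inter hq.compl)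

/- the basic atom -/

lemma isOpen_U {k : ℕ} (t x : Fin k → ℕ) :
    IsOpen {g : Equiv.Perm ℕ | ∀ i, g (t i) = x i} := by
  letI : TopologicalSpace ℕ := ⊥
  have hcont : Continuous (fun g : Equiv.Perm ℕ =>
      ((g : ℕ → ℕ), ((g⁻¹ : Equiv.Perm ℕ) : ℕ → ℕ))) := continuous_induced_dom
  have heq : {g : Equiv.Perm ℕ | ∀ i, g (t i) = x i} =
      (fun g : Equiv.Perm ℕ => ((g : ℕ → ℕ), ((g⁻¹ : Equiv.Perm ℕ) : ℕ → ℕ))) ⁻¹'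
        (⋂ i, {p : (ℕ → ℕ) × (ℕ → ℕ) | p.1 (t i) = x i}) := by
    ext g; simp
  rw [heq]
  apply IsOpen.preimage hcont
  apply isOpen_iInter_of_finite
  intro i
  have : {p : (ℕ → ℕ) × (ℕ → ℕ) | p.1 (t i) = x i}
      = (fun p : (ℕ → ℕ) × (ℕ → ℕ) => p.1 (t i)) ⁻¹' {x i} := rfl
  rw [this]
  exact (((continuous_apply (t i)).comp continuous_fst)).isOpen_preimage _ (isOpen_discrete _)

lemma meas_atom {k : ℕ} (t x : Fin k → ℕ) :
    MeasurableSet {G : ClosedSubgroups |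
      Quotient.mk (MulAction.orbitRel G.1 (Fin k → ℕ)) x =
        Quotient.mk (MulAction.orbitRel G.1 (Fin k → ℕ)) t} := by
  have heq : {G : ClosedSubgroups |
      Quotient.mk (MulAction.orbitRel G.1 (Fin k → ℕ)) x =
        Quotient.mk (MulAction.orbitRel G.1 (Fin k → ℕ)) t}
      = {G : ClosedSubgroups |
          (((G.1 : Subgroup (Equiv.Perm ℕ)) : Set (Equiv.Perm ℕ)) ∩
            {g : Equiv.Perm ℕ | ∀ i, g (t i) = x i}).Nonempty} := by
    ext G
    simp only [Set.mem_setOf_eq]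
    rw [Quotient.eq]
    show x ∈ MulAction.orbit G.1 t ↔ _
    rw [MulAction.mem_orbit_iff]
    constructor
    · rintro ⟨⟨g, hg⟩, rfl⟩
      exact ⟨g, hg, fun i => rfl⟩
    · rintro ⟨g, hg, hgt⟩
      exact ⟨⟨g, hg⟩, funext fun i => hgt i⟩
  rw [heq]
  exact MeasurableSpace.measurableSet_generateFrom ⟨_, isOpen_U t x, rfl⟩

end Aux2

section Aux3
open FirstOrder FirstOrder.Language MulAction

lemma term_realize_str (S T : L0.Structure ℕ) {β : Type} (v : β → ℕ) (t : L0.Term β) :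
    @Term.realize L0 ℕ S β v t = @Term.realize L0 ℕ T β v t := by
  induction t with
  | var => rfl
  | func f ts ih => exact isEmptyElim f

lemma meas_realize {α : Type} (v : α → ℕ) :
    ∀ {k : ℕ} (θ : L0.BoundedFormula α k) (xs : Fin k → ℕ),
      MeasurableSet {G : ClosedSubgroups |
        @BoundedFormula.Realize L0 ℕ (str G.1) α k θ v xs} := by
  intro k θ
  induction θ with
  | falsum =>
    intro xs
    exact measSet_congr (fun G => @BoundedFormula.realize_bot L0 ℕ (str G.1) _ _ v xs)
      (measSet_const False)
  | @equal k t₁ t₂ =>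
    intro xs
    refine measSet_congr (q := fun _ =>
        @Term.realize L0 ℕ (str ⊥) _ (Sum.elim v xs) t₁ =
          @Term.realize L0 ℕ (str ⊥) _ (Sum.elim v xs) t₂) (fun G => ?_) (measSet_const _)
    letI := str G.1
    rw [show (BoundedFormula.equal t₁ t₂).Realize v xs ↔
        Term.realize (Sum.elim v xs) t₁ = Term.realize (Sum.elim v xs) t₂ from
      BoundedFormula.realize_bdEqual t₁ t₂]
    rw [term_realize_str (str G.1) (str ⊥), term_realize_str (str G.1) (str ⊥)]
  | @rel k l R ts =>
    intro xs
    refine measSet_congr (q := fun G =>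
        Quotient.mk (MulAction.orbitRel G.1 (Fin l → ℕ))
            (fun i => @Term.realize L0 ℕ (str ⊥) _ (Sum.elim v xs) (ts i)) =
          Quotient.mk (MulAction.orbitRel G.1 (Fin l → ℕ)) R) (fun G => ?_)
      (meas_atom R _)
    letI := str G.1
    rw [show (BoundedFormula.rel R ts).Realize v xs ↔
        Structure.RelMap R (fun i => Term.realize (Sum.elim v xs) (ts i)) from
      BoundedFormula.realize_rel]
    show (Quotient.mk _ _ = Quotient.mk _ _) ↔ _
    have : (fun i => @Term.realize L0 ℕ (str G.1) _ (Sum.elim v xs) (ts i))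
        = fun i => @Term.realize L0 ℕ (str ⊥) _ (Sum.elim v xs) (ts i) :=
      funext fun i => term_realize_str _ _ _ _
    rw [this]
  | @imp k φ ψ ihφ ihψ =>
    intro xs
    refine measSet_congr (q := fun G =>
        @BoundedFormula.Realize L0 ℕ (str G.1) α k φ v xs →
          @BoundedFormula.Realize L0 ℕ (str G.1) α k ψ v xs) (fun G => ?_)
      (meas_imp (ihφ xs) (ihψ xs))
    letI := str G.1
    exact BoundedFormula.realize_imp
  | @all k φ ih =>
    intro xs
    refine measSet_congr (q := fun G => ∀ a : ℕ,
        @BoundedFormula.Realize L0 ℕ (str G.1) α (k + 1) φ v (Fin.snoc xs a)) (fun G => ?_)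
      (meas_forall fun a => ih (Fin.snoc xs a))
    letI := str G.1
    exact BoundedFormula.realize_all

lemma meas_realize_formula {α : Type} (θ : L0.Formula α) (v : α → ℕ) :
    MeasurableSet {G : ClosedSubgroups | @Formula.Realize L0 ℕ (str G.1) α θ v} :=
by
  unfold Formula.Realize
  refine measSet_congr (fun G => ?_) (meas_realize v θ (fun x => x.elim0))
  letI := str G.1
  exact iff_of_eq (congrArg (fun xs => BoundedFormula.Realize θ v xs) (Subsingleton.elim _ _))

end Aux3

section Aux4
open FirstOrder FirstOrder.Language MulAction

lemma equivalence_congr {α : Sort*} {R S : α → α → Prop} (h : ∀ x y, R x y ↔ S x y)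
    (hS : Equivalence S) : Equivalence R :=
  ⟨fun x => (h x x).2 (hS.refl x),
   fun hxy => (h _ _).2 (hS.symm ((h _ _).1 hxy)),
   fun hxy hyz => (h _ _).2 (hS.trans ((h _ _).1 hxy) ((h _ _).1 hyz))⟩

lemma equivalence_iff {α : Sort*} (R : α → α → Prop) :
    Equivalence R ↔ ((∀ x, R x x) ∧ (∀ x y, R x y → R y x) ∧
      (∀ x y z, R x y → R y z → R x z)) :=
  ⟨fun h => ⟨h.refl, fun _ _ => h.symm, fun _ _ _ => h.trans⟩,
   fun h => ⟨h.1, fun {x y} hxy => h.2.1 x y hxy, fun {x y z} hxy hyz => h.2.2 x y z hxy hyz⟩⟩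

/-- `HasWEIFormulas` over the fixed coding language. -/
def W (G : Subgroup (Equiv.Perm ℕ)) : Prop := @HasWEIFormulas L0 ℕ (str G)

lemma wei_iff (G : Subgroup (Equiv.Perm ℕ)) :
    HasWEIFormulas (canonicalLanguage G) ℕ ↔ W G := by
  letI := str G
  haveI h1 : (ofL0 G).IsExpansionOn ℕ := ofL0_expansion G
  haveI h2 : (toL0 G).IsExpansionOn ℕ := toL0_expansion G
  constructor
  · intro h n θ hθ
    obtain ⟨m, φ, hφ⟩ := h n ((ofL0 G).onFormula θ)
      (equivalence_congr (fun x y => (ofL0 G).realize_onFormula θ) hθ)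
    refine ⟨m, (toL0 G).onFormula φ, fun a => ?_⟩
    obtain ⟨X, hfin, hne, hX⟩ := hφ a
    refine ⟨X, hfin, hne, fun b => ?_⟩
    rw [← hX b]
    have e1 : {x : Fin n → ℕ | θ.Realize (Sum.elim x a)} =
        {x : Fin n → ℕ | ((ofL0 G).onFormula θ).Realize (Sum.elim x a)} :=
      Set.ext fun x => ((ofL0 G).realize_onFormula θ).symm
    have e2 : {x : Fin n → ℕ | ((toL0 G).onFormula φ).Realize (Sum.elim x b)} =
        {x : Fin n → ℕ | φ.Realize (Sum.elim x b)} :=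
      Set.ext fun x => (toL0 G).realize_onFormula φ
    rw [e1, e2]
  · intro h n θ hθ
    obtain ⟨m, φ, hφ⟩ := h n ((toL0 G).onFormula θ)
      (equivalence_congr (fun x y => (toL0 G).realize_onFormula θ) hθ)
    refine ⟨m, (ofL0 G).onFormula φ, fun a => ?_⟩
    obtain ⟨X, hfin, hne, hX⟩ := hφ a
    refine ⟨X, hfin, hne, fun b => ?_⟩
    rw [← hX b]
    have e1 : {x : Fin n → ℕ | θ.Realize (Sum.elim x a)} =
        {x : Fin n → ℕ | ((toL0 G).onFormula θ).Realize (Sum.elim x a)} :=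
      Set.ext fun x => ((toL0 G).realize_onFormula θ).symm
    have e2 : {x : Fin n → ℕ | ((ofL0 G).onFormula φ).Realize (Sum.elim x b)} =
        {x : Fin n → ℕ | φ.Realize (Sum.elim x b)} :=
      Set.ext fun x => (ofL0 G).realize_onFormula φ
    rw [e1, e2]

lemma olig_iff (G : Subgroup (Equiv.Perm ℕ)) :
    IsOligomorphic G ↔ ∀ n : ℕ, ∃ T : Finset (Fin n → ℕ), ∀ x : Fin n → ℕ,
      ∃ t ∈ T, Quotient.mk (MulAction.orbitRel G (Fin n → ℕ)) x =
        Quotient.mk (MulAction.orbitRel G (Fin n → ℕ)) t := by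
  constructor
  · intro h n
    haveI := h n
    haveI : Fintype (MulAction.orbitRel.Quotient G (Fin n → ℕ)) := Fintype.ofFinite _
    refine ⟨Finset.univ.image
      (Quotient.out : MulAction.orbitRel.Quotient G (Fin n → ℕ) → (Fin n → ℕ)), fun x => ?_⟩
    refine ⟨(Quotient.mk (MulAction.orbitRel G (Fin n → ℕ)) x).out,
      Finset.mem_image_of_mem _ (Finset.mem_univ _), ?_⟩
    exact (Quotient.out_eq _).symm
  · intro h n
    obtain ⟨T, hT⟩ := h n
    have hsurj : Function.Surjective
        (fun t : {t // t ∈ T} => Quotient.mk (MulAction.orbitRel G (Fin n → ℕ)) (t : Fin n → ℕ) :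
          {t // t ∈ T} → MulAction.orbitRel.Quotient G (Fin n → ℕ)) := by
      intro q
      obtain ⟨x, rfl⟩ := Quotient.exists_rep q
      obtain ⟨t, htT, hxt⟩ := hT x
      exact ⟨⟨t, htT⟩, hxt.symm⟩
    exact Finite.of_surjective _ hsurj

end Aux4

section Aux5
open FirstOrder FirstOrder.Language MulAction

lemma exists_finset_iff {β : Type} (Q : Set β → Prop) :
    (∃ X : Set β, X.Finite ∧ X.Nonempty ∧ Q X) ↔
      ∃ X : Finset β, (X : Set β).Nonempty ∧ Q (X : Set β) := by
  constructor
  · rintro ⟨X, hf, hne, hQ⟩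
    refine ⟨hf.toFinset, ?_, ?_⟩ <;> rw [Set.Finite.coe_toFinset] <;> assumption
  · rintro ⟨X, hne, hQ⟩
    exact ⟨X, X.finite_toSet, hne, hQ⟩


end Aux5

/-- Weak elimination of imaginaries is a Borel property: the set of
oligomorphic closed subgroups of `Sym(ω)` whose canonical structure has weak elimination
of imaginaries is a Borel subset of the Effros Borel space of closed subgroups of
`Sym(ω)`. -/
theorem stmt_18 :
    MeasurableSet {G : ClosedSubgroups |
      IsOligomorphic G.1 ∧ HasWEIFormulas (canonicalLanguage G.1) ℕ} := by
  refine measSet_congr (q := fun G => IsOligomorphic G.1 ∧ W G.1)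
    (fun G => and_congr_right fun _ => wei_iff G.1) (meas_and ?holig ?hwei)
  case holig =>
    refine measSet_congr (fun G => olig_iff G.1) ?_
    refine meas_forall fun n => ?_
    refine meas_exists fun T => ?_
    refine meas_forall fun x => ?_
    refine meas_exists fun t => ?_
    exact meas_and (measSet_const _) (meas_atom t x)
  case hwei =>
    unfold W HasWEIFormulas
    refine meas_forall fun n => ?_
    refine meas_forall fun θ => ?_
    refine meas_imp ?_ ?_
    · refine measSet_congr (fun G => equivalence_iff _) ?_
      refine meas_and (meas_forall fun x => ?_) (meas_and
        (meas_forall fun x => meas_forall fun y => meas_imp ?_ ?_)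
        (meas_forall fun x => meas_forall fun y => meas_forall fun z =>
          meas_imp ?_ (meas_imp ?_ ?_)))
      all_goals exact meas_realize_formula θ _
    · refine meas_exists fun m => ?_
      refine meas_exists fun φ => ?_
      refine meas_forall fun a => ?_
      refine measSet_congr (fun G => exists_finset_iff _) ?_
      refine meas_exists fun X => ?_
      refine meas_and (measSet_const _) ?_
      refine meas_forall fun b => ?_
      refine meas_iff ?_ (measSet_const _)
      refine measSet_congr (fun G => Set.ext_iff) ?_
      refine meas_forall fun x => ?_
      exact meas_iff (meas_realize_formula θ _) (meas_realize_formula φ _)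

end Paper
end
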